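/- Let V be an indecomposable regular representation of the Kronecker quiver with dimension vector nδ, and let M = P ⊕ M′ ⊕ I with P ≠ 0 preprojective, M′ regular, I ≠ 0 preinjective and dim M = nδ. Then dim O_V > dim O_M, where O denotes the orbit in the representation variety E_{nδ} under the action of G_{nδ}. -/
import Mathlib


open scoped BigOperators

noncomputable section

/-- Abstract model of the data underlying the Ringel–Hall algebra of the
Kronecker quiver over a finite field `𝔽_q` (`v = √q`).  `P` is the set of
isomorphism classes of finite-dimensional representations, `hall M N` records
the Hall numbers `L ↦ g^L_{M N}` (the number of submodules `W ⊆ L` with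
`W ≅ N` and `L/W ≅ M`), `dimv` the dimension vector, `dsum` direct sum,
`dimHom M N = dim Hom(M,N)`, `dimExt M N = dim Ext¹(M,N)`, `dimOrb M` the
dimension of the `G`-orbit of `M` in the representation variety. -/
structure KroneckerHall where
  q : ℕ
  hq : IsPrimePow q
  v : ℝ
  hv : v ^ 2 = (q : ℝ)
  hvpos : 0 < v
  P : Type
  dimv : P → ℕ × ℕ
  zero : P
  dimv_zero : dimv zero = (0, 0)
  dimv_eq_zero : ∀ M, dimv M = (0, 0) → M = zero
  dsum : P → P → P
  dimv_dsum : ∀ M N, dimv (dsum M N) = dimv M + dimv N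
  indec : P → Prop
  regular : P → Prop
  prep : P → Prop
  prei : P → Prop
  regular_zero : regular zero
  prep_zero : prep zero
  prei_zero : prei zero
  Vprep : ℕ → P
  dimv_Vprep : ∀ n, dimv (Vprep n) = (n + 1, n)
  indec_Vprep : ∀ n, indec (Vprep n)
  prep_Vprep : ∀ n, prep (Vprep n)
  Vprei : ℕ → P
  dimv_Vprei : ∀ n, dimv (Vprei n) = (n, n + 1)
  indec_Vprei : ∀ n, indec (Vprei n)
  prei_Vprei : ∀ n, prei (Vprei n)
  /-- every nonzero preprojective class has an indecomposable preprojective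
  direct summand -/
  prep_decomp : ∀ M, prep M → M ≠ zero → ∃ i N, prep N ∧ M = dsum (Vprep i) N
  prei_decomp : ∀ M, prei M → M ≠ zero → ∃ i N, prei N ∧ M = dsum (Vprei i) N
  dimHom : P → P → ℕ
  dimExt : P → P → ℕ
  /-- `dim Hom(M,N) - dim Ext¹(M,N) = ⟨dim M, dim N⟩` -/
  homext : ∀ M N, (dimHom M N : ℤ) - dimExt M N =
    (dimv M).1 * (dimv N).1 + (dimv M).2 * (dimv N).2 - 2 * (dimv M).2 * (dimv N).1
  dimHom_dsum_left : ∀ M N L, dimHom (dsum M N) L = dimHom M L + dimHom N L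
  dimHom_dsum_right : ∀ L M N, dimHom L (dsum M N) = dimHom L M + dimHom L N
  dimHom_Vprep_self : ∀ n, dimHom (Vprep n) (Vprep n) = 1
  dimHom_Vprei_self : ∀ n, dimHom (Vprei n) (Vprei n) = 1
  /-- no nonzero maps from preinjectives to preprojectives, etc. -/
  hom_prei_prep : ∀ M N, prei M → prep N → M ≠ zero → N ≠ zero → dimHom M N = 0
  hom_prei_reg : ∀ M N, prei M → regular N → M ≠ zero → N ≠ zero → dimHom M N = 0
  hom_reg_prep : ∀ M N, regular M → prep N → M ≠ zero → N ≠ zero → dimHom M N = 0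
  ext_prep_reg : ∀ M N, prep M → regular N → dimExt M N = 0
  ext_prep_prei : ∀ M N, prep M → prei N → dimExt M N = 0
  ext_reg_prei : ∀ M N, regular M → prei N → dimExt M N = 0
  /-- an indecomposable regular module of dimension vector `nδ` has
  `n`-dimensional endomorphism ring -/
  end_indec_reg : ∀ M n, indec M → regular M → dimv M = (n, n) → dimHom M M = n
  end_reg_ge : ∀ M n, regular M → dimv M = (n, n) → n ≤ dimHom M M
  /-- dimension of the orbit `O_M ⊆ E_{dim M}`:
  `dim O_M = dim G_{dim M} - dim End(M)` -/
  dimOrb : P → ℤ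
  dimOrb_eq : ∀ M,
    dimOrb M = ((dimv M).1 ^ 2 + (dimv M).2 ^ 2 : ℤ) - dimHom M M
  hall : P → P → P →₀ ℕ
  hall_dim : ∀ M N L, (hall M N) L ≠ 0 → dimv L = dimv M + dimv N
  hall_zero_left : ∀ M, hall zero M = Finsupp.single M 1
  hall_zero_right : ∀ M, hall M zero = Finsupp.single M 1
  /-- associativity of the Hall numbers -/
  hall_assoc : ∀ M N L,
    ((hall M N).sum fun X g => g • hall X L) =
      ((hall N L).sum fun Y g => g • hall M Y)
  finite_dim : ∀ d : ℕ × ℕ, {M : P | dimv M = d}.Finite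

namespace KroneckerHall

variable (D : KroneckerHall)

/-- The underlying space of the Ringel–Hall algebra: the free module on the
set of isomorphism classes (we realise the coefficient field `ℚ(v) ⊆ ℝ`
inside `ℝ`). -/
abbrev HA := D.P →₀ ℝ

/-- basis element `u_[M]` -/
def u (M : D.P) : HA D := Finsupp.single M 1

/-- the identity `u_[0]` -/
def one : HA D := D.u D.zero

/-- `u_[M] · u_[N] = ∑_L g^L_{MN} u_[L]` as an element of `HA`. -/
def hallRow (M N : D.P) : HA D :=
  Finsupp.mapRange (fun n : ℕ => (n : ℝ)) (by simp) (D.hall M N)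

/-- the (untwisted) Hall multiplication -/
def mulH (x y : HA D) : HA D :=
  x.sum fun M a => y.sum fun N b => (a * b) • D.hallRow M N

/-- Euler form of the Kronecker quiver -/
def euler (a b : ℕ × ℕ) : ℤ :=
  (a.1 : ℤ) * b.1 + (a.2 : ℤ) * b.2 - 2 * (a.2 : ℤ) * b.1

/-- the twisted Hall multiplication `u_[M] ∗ u_[N] = v^{⟨dim M,dim N⟩} u_[M]u_[N]` -/
def tmul (x y : HA D) : HA D :=
  x.sum fun M a => y.sum fun N b =>
    (a * b * D.v ^ euler (D.dimv M) (D.dimv N)) • D.hallRow M N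

/-- regular part `R(x)` of an element of the Hall algebra -/
def rpart (x : HA D) : HA D := by
  classical exact x.filter fun M => D.regular M

/-- `R_{kδ}`: the sum of all `u_[M]` with `M` regular of dimension vector `kδ` -/
def Rdelta (k : ℕ) : HA D := by
  classical
  exact ∑ M ∈ ((D.finite_dim (k, k)).toFinset.filter fun M => D.regular M), D.u M

/-- `E_{(n+1,n)} = v^{-2n} u_{(n+1,n)}` -/
def Eprep (n : ℕ) : HA D := (D.v ^ (-(2 * n : ℤ))) • D.u (D.Vprep n)

/-- `E_{(n,n+1)} = v^{-2n} u_{(n,n+1)}` -/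
def Eprei (n : ℕ) : HA D := (D.v ^ (-(2 * n : ℤ))) • D.u (D.Vprei n)

/-- the Chevalley generator `E_1 = E_{(1,0)}` -/
def E1 : HA D := D.Eprep 0

/-- the Chevalley generator `E_2 = E_{(0,1)}` -/
def E2 : HA D := D.Eprei 0

/-- `Ẽ_{nδ} = E_{(n-1,n)} ∗ E_1 - v^{-2} E_1 ∗ E_{(n-1,n)}` -/
def Etilde (n : ℕ) : HA D :=
  D.tmul (D.Eprei (n - 1)) D.E1 - (D.v ^ (-2 : ℤ)) • D.tmul D.E1 (D.Eprei (n - 1))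

/-- the quantum integer `[k] = (v^k - v^{-k})/(v - v^{-1})` -/
def qint (k : ℕ) : ℝ := ∑ i ∈ Finset.range k, D.v ^ ((k : ℤ) - 1 - 2 * i)

/-- the quantum factorial `[m]!` -/
def qfact (m : ℕ) : ℝ := ∏ r ∈ Finset.Icc 1 m, D.qint r

/-- powers with respect to the twisted multiplication -/
def tpow (x : HA D) : ℕ → HA D
  | 0 => D.one
  | m + 1 => D.tmul x (tpow x m)

/-- divided powers `x^{(∗m)} = x^{∗m}/[m]!` -/
def dpow (x : HA D) (m : ℕ) : HA D := (D.qfact m)⁻¹ • D.tpow x m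

/-- the imaginary root vectors, defined inductively by `E_{0δ} = 1` and
`E_{kδ} = [k]⁻¹ ∑_{s=1}^k v^{s-k} Ẽ_{sδ} ∗ E_{(k-s)δ}`. -/
def Edelta : ℕ → HA D
  | 0 => D.one
  | k + 1 =>
      (D.qint (k + 1))⁻¹ •
        ∑ s ∈ Finset.range (k + 1),
          (D.v ^ ((s : ℤ) - k)) • D.tmul (D.Etilde (s + 1)) (Edelta (k - s))
  decreasing_by omega

end KroneckerHall

end

/-- **Lemma 4.5.** Let `V` be an indecomposable regular representation of the
Kronecker quiver with dimension vector `nδ`, and let `M = P ⊕ M′ ⊕ I` with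
`P ≠ 0` preprojective, `M′` regular, `I ≠ 0` preinjective, and
`dim M = nδ`.  Then `dim O_V > dim O_M`, where `O` denotes the orbit in the
representation variety `E_{nδ}` under the action of `G_{nδ}`. -/

lemma kh_key_ineq (a b c d e f n : ℤ) (hb : 0 ≤ b) (hc : 0 ≤ c) (hd : 0 ≤ d) (he : 0 ≤ e)
    (hab : b < a) (hef : e < f) (h1 : a + c + e = n) (h2 : b + d + f = n) :
    n < (a*a + b*b - 2*b*a) + (a*c + b*d - 2*b*c) + (a*e + b*f - 2*b*e)
      + (c*c + d*d - 2*d*c) + (c*e + d*f - 2*d*e) + (e*e + f*f - 2*f*e) := by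
  have hc' : c = n - a - e := by linarith
  have hd' : d = n - b - f := by linarith
  subst hc' hd'
  have hn : 1 ≤ n := by linarith
  have hp1 : 1 ≤ a - b := by linarith
  have hj1 : 1 ≤ f - e := by linarith
  have hsq : 1 ≤ (a - b) * (a - b) := by nlinarith
  rcases le_or_gt (f - e) (a - b) with h | h
  · have t1 : 0 ≤ (n - a - e) * (a - b) := mul_nonneg hc (by linarith)
    have t2 : 0 ≤ b * ((a - b) - (f - e)) := mul_nonneg hb (by linarith)
    have t3 : 0 ≤ n * ((f - e) - 1) := mul_nonneg (by linarith) (by linarith)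
    have t4 : 0 ≤ ((a - b) - (f - e)) * ((a - b) - (f - e)) := mul_self_nonneg _
    nlinarith [t1, t2, t3, t4, hsq]
  · have t1 : 0 ≤ (n - a - e) * (a - b) := mul_nonneg hc (by linarith)
    have t2 : 0 ≤ (n - a) * ((f - e) - (a - b)) := mul_nonneg (by linarith) (by linarith)
    have t3 : 0 ≤ n * ((a - b) - 1) := mul_nonneg (by linarith) (by linarith)
    have t4 : 0 ≤ (f - e) * ((f - e) - (a - b)) := mul_nonneg (by linarith) (by linarith)
    nlinarith [t1, t2, t3, t4, hsq]

namespace KroneckerHall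

variable (D : KroneckerHall)

lemma dsum_zero_zero : D.dsum D.zero D.zero = D.zero :=
  D.dimv_eq_zero _ (by rw [D.dimv_dsum, D.dimv_zero]; rfl)

lemma dimHom_zero_left (M : D.P) : D.dimHom D.zero M = 0 := by
  have h := D.dimHom_dsum_left D.zero D.zero M
  rw [D.dsum_zero_zero] at h
  omega

lemma dimHom_zero_right (M : D.P) : D.dimHom M D.zero = 0 := by
  have h := D.dimHom_dsum_right M D.zero D.zero
  rw [D.dsum_zero_zero] at h
  omega

lemma prep_dim_le : ∀ (k : ℕ) (M : D.P), (D.dimv M).1 + (D.dimv M).2 ≤ k → D.prep M →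
    (D.dimv M).2 ≤ (D.dimv M).1 := by
  intro k
  induction k with
  | zero =>
    intro M hk _
    omega
  | succ k ih =>
    intro M hk hM
    by_cases h0 : M = D.zero
    · subst h0; rw [D.dimv_zero]
    · obtain ⟨i, N, hN, hMeq⟩ := D.prep_decomp M hM h0
      have hd : D.dimv M = D.dimv (D.Vprep i) + D.dimv N := by rw [hMeq, D.dimv_dsum]
      rw [D.dimv_Vprep] at hd
      have hN1 : (D.dimv N).1 + (D.dimv N).2 ≤ k := by
        have h1 : (D.dimv M).1 = (i + 1) + (D.dimv N).1 := by rw [hd]; rfl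
        have h2 : (D.dimv M).2 = i + (D.dimv N).2 := by rw [hd]; rfl
        omega
      have := ih N hN1 hN
      have h1 : (D.dimv M).1 = (i + 1) + (D.dimv N).1 := by rw [hd]; rfl
      have h2 : (D.dimv M).2 = i + (D.dimv N).2 := by rw [hd]; rfl
      omega

lemma prei_dim_le : ∀ (k : ℕ) (M : D.P), (D.dimv M).1 + (D.dimv M).2 ≤ k → D.prei M →
    (D.dimv M).1 ≤ (D.dimv M).2 := by
  intro k
  induction k with
  | zero =>
    intro M hk _
    omega
  | succ k ih =>
    intro M hk hM
    by_cases h0 : M = D.zero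
    · subst h0; rw [D.dimv_zero]
    · obtain ⟨i, N, hN, hMeq⟩ := D.prei_decomp M hM h0
      have hd : D.dimv M = D.dimv (D.Vprei i) + D.dimv N := by rw [hMeq, D.dimv_dsum]
      rw [D.dimv_Vprei] at hd
      have h1 : (D.dimv M).1 = i + (D.dimv N).1 := by rw [hd]; rfl
      have h2 : (D.dimv M).2 = (i + 1) + (D.dimv N).2 := by rw [hd]; rfl
      have hN1 : (D.dimv N).1 + (D.dimv N).2 ≤ k := by omega
      have := ih N hN1 hN
      omega

lemma prep_dim_lt (M : D.P) (hM : D.prep M) (h0 : M ≠ D.zero) :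
    (D.dimv M).2 < (D.dimv M).1 := by
  obtain ⟨i, N, hN, hMeq⟩ := D.prep_decomp M hM h0
  have hd : D.dimv M = D.dimv (D.Vprep i) + D.dimv N := by rw [hMeq, D.dimv_dsum]
  rw [D.dimv_Vprep] at hd
  have h1 : (D.dimv M).1 = (i + 1) + (D.dimv N).1 := by rw [hd]; rfl
  have h2 : (D.dimv M).2 = i + (D.dimv N).2 := by rw [hd]; rfl
  have := D.prep_dim_le ((D.dimv N).1 + (D.dimv N).2) N le_rfl hN
  omega

lemma prei_dim_lt (M : D.P) (hM : D.prei M) (h0 : M ≠ D.zero) :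
    (D.dimv M).1 < (D.dimv M).2 := by
  obtain ⟨i, N, hN, hMeq⟩ := D.prei_decomp M hM h0
  have hd : D.dimv M = D.dimv (D.Vprei i) + D.dimv N := by rw [hMeq, D.dimv_dsum]
  rw [D.dimv_Vprei] at hd
  have h1 : (D.dimv M).1 = i + (D.dimv N).1 := by rw [hd]; rfl
  have h2 : (D.dimv M).2 = (i + 1) + (D.dimv N).2 := by rw [hd]; rfl
  have := D.prei_dim_le ((D.dimv N).1 + (D.dimv N).2) N le_rfl hN
  omega

end KroneckerHall

theorem kroneckerHall_orbit_dim_indec_regular_gt (D : KroneckerHall) (n : ℕ)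
    (V M P R I : D.P)
    (hVind : D.indec V) (hVreg : D.regular V) (hVdim : D.dimv V = (n, n))
    (hM : M = D.dsum P (D.dsum R I))
    (hP : D.prep P) (hP0 : P ≠ D.zero)
    (hR : D.regular R)
    (hI : D.prei I) (hI0 : I ≠ D.zero)
    (hMdim : D.dimv M = (n, n)) :
    D.dimOrb M < D.dimOrb V := by
  classical
  -- notation for the six dimension-vector components
  set a := ((D.dimv P).1 : ℤ) with ha
  set b := ((D.dimv P).2 : ℤ) with hb
  set c := ((D.dimv R).1 : ℤ) with hc
  set d := ((D.dimv R).2 : ℤ) with hd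
  set e := ((D.dimv I).1 : ℤ) with he
  set f := ((D.dimv I).2 : ℤ) with hf
  have hMd : D.dimv M = D.dimv P + (D.dimv R + D.dimv I) := by
    rw [hM, D.dimv_dsum, D.dimv_dsum]
  have hsum1 : a + c + e = (n : ℤ) := by
    have := congrArg Prod.fst hMd
    rw [hMdim] at this
    simp [Prod.fst_add] at this
    push_cast [ha, hc, he]
    omega
  have hsum2 : b + d + f = (n : ℤ) := by
    have := congrArg Prod.snd hMd
    rw [hMdim] at this
    simp [Prod.snd_add] at this
    push_cast [hb, hd, hf]
    omega
  -- endomorphism ring of V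
  have hVV : D.dimHom V V = n := D.end_indec_reg V n hVind hVreg hVdim
  -- expand dimHom M M
  have hHMM : D.dimHom M M =
      D.dimHom P P + D.dimHom P R + D.dimHom P I
      + D.dimHom R P + D.dimHom R R + D.dimHom R I
      + D.dimHom I P + D.dimHom I R + D.dimHom I I := by
    rw [hM]
    simp only [D.dimHom_dsum_left, D.dimHom_dsum_right]
    ring
  -- vanishing Hom spaces
  have hRP : D.dimHom R P = 0 := by
    by_cases h0 : R = D.zero
    · rw [h0]; exact D.dimHom_zero_left P
    · exact D.hom_reg_prep R P hR hP h0 hP0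
  have hIP : D.dimHom I P = 0 := D.hom_prei_prep I P hI hP hI0 hP0
  have hIR : D.dimHom I R = 0 := by
    by_cases h0 : R = D.zero
    · rw [h0]; exact D.dimHom_zero_right I
    · exact D.hom_prei_reg I R hI hR hI0 h0
  -- Euler form values
  have hPR : (D.dimHom P R : ℤ) = a * c + b * d - 2 * b * c := by
    have h := D.homext P R
    rw [D.ext_prep_reg P R hP hR] at h
    push_cast at h ⊢
    linarith
  have hPI : (D.dimHom P I : ℤ) = a * e + b * f - 2 * b * e := by
    have h := D.homext P I
    rw [D.ext_prep_prei P I hP hI] at h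
    push_cast at h ⊢
    linarith
  have hRI : (D.dimHom R I : ℤ) = c * e + d * f - 2 * d * e := by
    have h := D.homext R I
    rw [D.ext_reg_prei R I hR hI] at h
    push_cast at h ⊢
    linarith
  -- self-Hom lower bounds (Ext ≥ 0)
  have hPP : a * a + b * b - 2 * b * a ≤ (D.dimHom P P : ℤ) := by
    have h := D.homext P P
    have : (0 : ℤ) ≤ D.dimExt P P := Int.natCast_nonneg _
    push_cast at h ⊢
    linarith
  have hRR : c * c + d * d - 2 * d * c ≤ (D.dimHom R R : ℤ) := by
    have h := D.homext R R
    have : (0 : ℤ) ≤ D.dimExt R R := Int.natCast_nonneg _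
    push_cast at h ⊢
    linarith
  have hII : e * e + f * f - 2 * f * e ≤ (D.dimHom I I : ℤ) := by
    have h := D.homext I I
    have : (0 : ℤ) ≤ D.dimExt I I := Int.natCast_nonneg _
    push_cast at h ⊢
    linarith
  -- sign facts
  have hbA : b < a := by
    have := D.prep_dim_lt P hP hP0
    omega
  have hef : e < f := by
    have := D.prei_dim_lt I hI hI0
    omega
  have hb0 : (0 : ℤ) ≤ b := Int.natCast_nonneg _
  have hc0 : (0 : ℤ) ≤ c := Int.natCast_nonneg _
  have hd0 : (0 : ℤ) ≤ d := Int.natCast_nonneg _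
  have he0 : (0 : ℤ) ≤ e := Int.natCast_nonneg _
  -- the key purely arithmetic inequality
  have key := kh_key_ineq a b c d e f n hb0 hc0 hd0 he0 hbA hef hsum1 hsum2
  have hMMlb : (n : ℤ) < (D.dimHom M M : ℤ) := by
    have hcast : (D.dimHom M M : ℤ) =
        (D.dimHom P P : ℤ) + D.dimHom P R + D.dimHom P I
        + D.dimHom R P + D.dimHom R R + D.dimHom R I
        + D.dimHom I P + D.dimHom I R + D.dimHom I I := by
      rw [hHMM]; push_cast; ring
    rw [hcast, hRP, hIP, hIR, hPR, hPI, hRI]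
    push_cast
    linarith [hPP, hRR, hII, key]
  -- conclude with the orbit dimension formula
  rw [D.dimOrb_eq M, D.dimOrb_eq V, hMdim, hVdim]
  simp only
  rw [hVV]
  have : (n : ℤ) ≤ (D.dimHom M M : ℤ) := le_of_lt hMMlb
  linarith
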